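/- The polynomial X⁴ − 37X³ − 592X² − 2738X − 4107 is irreducible over the imaginary quadratic field ℚ(√−111), the subfield of ℂ generated over ℚ by i√111. -/

import Mathlib

open Polynomial

section Aux

/-- representation of a monic quadratic -/
private lemma monic_quad_rep' {R : Type*} [CommRing R] {g : R[X]} (hm : g.Monic)
    (h2 : g.natDegree = 2) : g = X ^ 2 + C (g.coeff 1) * X + C (g.coeff 0) := by
  have h := g.eraseLead_add_C_mul_X_pow
  rw [hm.leadingCoeff, h2, map_one, one_mul] at h
  have hle : g.eraseLead.natDegree ≤ 1 := by
    have := g.eraseLead_natDegree_le; omega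
  have hrep := eq_X_add_C_of_natDegree_le_one hle
  rw [eraseLead_coeff_of_ne 1 (by omega), eraseLead_coeff_of_ne 0 (by omega)] at hrep
  conv_lhs => rw [← h, hrep]
  ring

private lemma f2_no_root' : ∀ x : ZMod 2, eval x (X ^ 4 + X ^ 3 + 1 : (ZMod 2)[X]) ≠ 0 := by
  intro x
  simp only [eval_add, eval_pow, eval_X, eval_one]
  fin_cases x <;> decide

private lemma f2_irred' : Irreducible (X ^ 4 + X ^ 3 + 1 : (ZMod 2)[X]) := by
  have hm : (X ^ 4 + X ^ 3 + 1 : (ZMod 2)[X]).Monic := by monicity!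
  have hnd : (X ^ 4 + X ^ 3 + 1 : (ZMod 2)[X]).natDegree = 4 := by compute_degree!
  rw [hm.irreducible_iff_natDegree']
  constructor
  · intro h
    have := congrArg (natDegree) h
    rw [hnd, natDegree_one] at this; exact (by norm_num : (4:ℕ) ≠ 0) this
  intro f g hf hg hfg hmem
  rw [hnd] at hmem
  obtain ⟨hmem1, hmem2⟩ := Finset.mem_Ioc.mp hmem
  have hnorootg : ∀ x : ZMod 2, eval x g ≠ 0 := by
    intro x hx
    exact f2_no_root' x (by rw [← hfg, eval_mul, hx, mul_zero])
  have hnorootf : ∀ x : ZMod 2, eval x f ≠ 0 := by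
    intro x hx
    exact f2_no_root' x (by rw [← hfg, eval_mul, hx, zero_mul])
  have hdegs : f.natDegree + g.natDegree = 4 := by
    rw [← hf.natDegree_mul hg, hfg, hnd]
  have zone : ∀ z : ZMod 2, z ≠ 0 → z = 1 := by decide
  interval_cases hgd : g.natDegree
  · have := hg.eq_X_add_C hgd
    apply hnorootg (-(g.coeff 0))
    rw [this]; simp; exact CharTwo.add_self_eq_zero _
  · have hfd : f.natDegree = 2 := by omega
    have hgrep := monic_quad_rep' hg hgd
    have hfrep := monic_quad_rep' hf hfd
    have hg0 : g.coeff 0 = 1 := by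
      apply zone; intro h0
      apply hnorootg 0; rw [hgrep]; simp [h0]
    have hg1 : g.coeff 1 = 1 := by
      apply zone; intro h1
      apply hnorootg 1; rw [hgrep]; simp [h1, hg0]; decide
    have hf0 : f.coeff 0 = 1 := by
      apply zone; intro h0
      apply hnorootf 0; rw [hfrep]; simp [h0]
    have hf1 : f.coeff 1 = 1 := by
      apply zone; intro h1
      apply hnorootf 1; rw [hfrep]; simp [h1, hf0]; decide
    rw [hgrep, hfrep, hg0, hg1, hf0, hf1] at hfg
    have h2 : (2 : (ZMod 2)[X]) = 0 := by
      have : ((2 : ℕ) : (ZMod 2)[X]) = 0 := CharP.cast_eq_zero _ 2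
      exact_mod_cast this
    have hexp : (X ^ 2 + C (1:ZMod 2) * X + C 1) * (X ^ 2 + C 1 * X + C 1)
        = X ^ 4 + X ^ 2 + 1 := by
      have h3 : (3 : (ZMod 2)[X]) = 1 := by
        have : (3 : (ZMod 2)[X]) = 2 + 1 := by norm_num
        rw [this, h2, zero_add]
      calc (X ^ 2 + C (1:ZMod 2) * X + C 1) * (X ^ 2 + C 1 * X + C 1)
          = X ^ 4 + 2 * X ^ 3 + 3 * X ^ 2 + 2 * X + 1 := by simp only [map_one]; ring
        _ = X ^ 4 + X ^ 2 + 1 := by rw [h2, h3]; ring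
    rw [hexp] at hfg
    have := congrArg (fun p => coeff p 3) hfg
    simp only [coeff_add, coeff_X_pow, coeff_one] at this
    norm_num at this

/-- The integer quartic. -/
private noncomputable def fZ' : ℤ[X] := X ^ 4 - 37 * X ^ 3 - 592 * X ^ 2 - 2738 * X - 4107

private lemma fZ'_monic : fZ'.Monic := by unfold fZ'; monicity!

private lemma fZ'_natDegree : fZ'.natDegree = 4 := by unfold fZ'; compute_degree!

private lemma fZ'_map {R : Type*} [CommRing R] :
    fZ'.map (Int.castRingHom R) =
      X ^ 4 - 37 * X ^ 3 - 592 * X ^ 2 - 2738 * X - 4107 := by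
  unfold fZ'
  simp only [Polynomial.map_sub, Polynomial.map_mul, Polynomial.map_pow, Polynomial.map_X,
    Polynomial.map_ofNat]

private lemma fZ'_map_zmod2 : fZ'.map (Int.castRingHom (ZMod 2)) = X ^ 4 + X ^ 3 + 1 := by
  rw [fZ'_map]
  rw [← map_ofNat (C : ZMod 2 →+* (ZMod 2)[X]) 37, ← map_ofNat (C : ZMod 2 →+* (ZMod 2)[X]) 592,
    ← map_ofNat (C : ZMod 2 →+* (ZMod 2)[X]) 2738, ← map_ofNat (C : ZMod 2 →+* (ZMod 2)[X]) 4107,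
    show ((37 : ZMod 2)) = 1 from by decide, show ((592 : ZMod 2)) = 0 from by decide,
    show ((2738 : ZMod 2)) = 0 from by decide, show ((4107 : ZMod 2)) = 1 from by decide,
    map_one, map_zero]
  rw [CharTwo.sub_eq_add, CharTwo.sub_eq_add, CharTwo.sub_eq_add, CharTwo.sub_eq_add]
  ring

private lemma fZ'_irred : Irreducible fZ' :=
  fZ'_monic.irreducible_of_irreducible_map (Int.castRingHom (ZMod 2)) fZ'
    (fZ'_map_zmod2 ▸ f2_irred')

private lemma fQ'_irred : Irreducible (fZ'.map (Int.castRingHom ℚ)) :=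
  (IsPrimitive.Int.irreducible_iff_irreducible_map_cast fZ'_monic.isPrimitive).mp fZ'_irred

/-- existence of a real root -/
private lemma exists_real_root' :
    ∃ θ : ℝ, θ ^ 4 - 37 * θ ^ 3 - 592 * θ ^ 2 - 2738 * θ - 4107 = 0 := by
  have hcont : ContinuousOn (fun t : ℝ => t ^ 4 - 37 * t ^ 3 - 592 * t ^ 2 - 2738 * t - 4107)
      (Set.Icc 0 50) := by fun_prop
  have h := intermediate_value_Icc (by norm_num : (0:ℝ) ≤ 50) hcont
  have h0 : (0:ℝ) ∈ Set.Icc ((fun t : ℝ => t ^ 4 - 37 * t ^ 3 - 592 * t ^ 2 - 2738 * t - 4107) 0)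
      ((fun t : ℝ => t ^ 4 - 37 * t ^ 3 - 592 * t ^ 2 - 2738 * t - 4107) 50) := by
    norm_num
  obtain ⟨θ, _, hθ⟩ := h h0
  exact ⟨θ, hθ⟩

/-- the reals as an intermediate field of ℂ over ℚ -/
private noncomputable def Rf' : IntermediateField ℚ ℂ :=
  Subfield.toIntermediateField Complex.ofRealHom.fieldRange
    (fun q => ⟨(q : ℝ), by push_cast; rfl⟩)

private lemma x_not_mem_Rf' : Complex.I * (Real.sqrt 111 : ℂ) ∉ Rf' := by
  intro hmem
  obtain ⟨r, hr⟩ := hmem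
  have := congrArg Complex.im hr
  simp [Complex.ofReal_im] at this
  exact (Real.sqrt_ne_zero'.mpr (by norm_num : (0:ℝ) < 111)) this.symm

end Aux

set_option maxHeartbeats 1000000 in
/-- The quartic `X⁴ − 37X³ − 592X² − 2738X − 4107` is irreducible over the imaginary
quadratic field `ℚ(√−111)`. -/
theorem quartic_irreducible_over_Q_sqrt_neg111 :
    Irreducible (Polynomial.X ^ 4 - 37 * Polynomial.X ^ 3 - 592 * Polynomial.X ^ 2
        - 2738 * Polynomial.X - 4107 :
      Polynomial (IntermediateField.adjoin ℚ
        ({Complex.I * (Real.sqrt 111 : ℂ)} : Set ℂ))) := by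
  set x : ℂ := Complex.I * (Real.sqrt 111 : ℂ) with hxdef
  set K : IntermediateField ℚ ℂ := IntermediateField.adjoin ℚ {x} with hKdef
  -- basic facts about x
  have hx2 : x ^ 2 = -111 := by
    rw [hxdef, mul_pow, Complex.I_sq, ← Complex.ofReal_pow,
      Real.sq_sqrt (by norm_num : (111:ℝ) ≥ 0)]
    norm_num
  have haeval_x : (aeval x) (X ^ 2 + 111 : ℚ[X]) = 0 := by
    simp only [map_add, map_pow, aeval_X, map_ofNat]
    rw [hx2]; ring
  have hxint : IsIntegral ℚ x :=
    IsAlgebraic.isIntegral ⟨X ^ 2 + 111,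
      Polynomial.Monic.ne_zero (by monicity!), haeval_x⟩
  haveI : FiniteDimensional ℚ K := IntermediateField.adjoin.finiteDimensional hxint
  have hK2 : Module.finrank ℚ K ≤ 2 := by
    rw [hKdef, IntermediateField.adjoin.finrank hxint]
    have h := Polynomial.natDegree_le_of_dvd (minpoly.dvd ℚ x haeval_x)
      (Polynomial.Monic.ne_zero (by monicity! : (X ^ 2 + 111 : ℚ[X]).Monic))
    have : (X ^ 2 + 111 : ℚ[X]).natDegree = 2 := by compute_degree!
    omega
  -- the real root
  obtain ⟨θ, hθ⟩ := exists_real_root'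
  set θc : ℂ := (θ : ℂ) with hθcdef
  have hθc : (θc : ℂ) ^ 4 - 37 * θc ^ 3 - 592 * θc ^ 2 - 2738 * θc - 4107 = 0 := by
    rw [hθcdef]
    exact_mod_cast congrArg (fun t : ℝ => (t : ℂ)) hθ
  -- aeval of fZ' at θc over ℚ and over K
  have haevalQ : (aeval θc) (fZ'.map (Int.castRingHom ℚ)) = 0 := by
    rw [← algebraMap_int_eq, aeval_map_algebraMap]
    unfold fZ'
    simp only [map_sub, map_mul, map_pow, aeval_X, map_ofNat]
    exact hθc
  have haevalK : (aeval θc) (fZ'.map (Int.castRingHom K)) = 0 := by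
    rw [← algebraMap_int_eq, aeval_map_algebraMap]
    unfold fZ'
    simp only [map_sub, map_mul, map_pow, aeval_X, map_ofNat]
    exact hθc
  have hθQint : IsIntegral ℚ θc :=
    IsAlgebraic.isIntegral ⟨fZ'.map (Int.castRingHom ℚ),
      (fZ'_monic.map _).ne_zero, haevalQ⟩
  have hθKint : IsIntegral K θc :=
    IsAlgebraic.isIntegral ⟨fZ'.map (Int.castRingHom K),
      (fZ'_monic.map _).ne_zero, haevalK⟩
  -- the minimal polynomial of θc over ℚ is fQ, of degree 4
  have hminQ : minpoly ℚ θc = fZ'.map (Int.castRingHom ℚ) :=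
    (minpoly.eq_of_irreducible_of_monic fQ'_irred haevalQ (fZ'_monic.map _)).symm
  -- set up the fields
  set E : IntermediateField K ℂ := IntermediateField.adjoin K {θc} with hE
  haveI : FiniteDimensional K E := IntermediateField.adjoin.finiteDimensional hθKint
  haveI : FiniteDimensional ℚ E := Module.Finite.trans K E
  have htower : Module.finrank ℚ K * Module.finrank K E = Module.finrank ℚ E :=
    Module.finrank_mul_finrank ℚ K E
  set E₀ : IntermediateField ℚ ℂ := IntermediateField.restrictScalars ℚ E with hE0
  haveI : FiniteDimensional ℚ E₀ := (inferInstance : FiniteDimensional ℚ E)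
  have hrkE0 : Module.finrank ℚ E₀ = Module.finrank ℚ E := rfl
  set F4 : IntermediateField ℚ ℂ := IntermediateField.adjoin ℚ {θc} with hF4
  haveI : FiniteDimensional ℚ F4 := IntermediateField.adjoin.finiteDimensional hθQint
  have h4 : Module.finrank ℚ F4 = 4 := by
    rw [hF4, IntermediateField.adjoin.finrank hθQint, hminQ, fZ'_monic.natDegree_map,
      fZ'_natDegree]
  have hle : F4 ≤ E₀ := by
    rw [hF4, IntermediateField.adjoin_le_iff]
    rintro z hz
    rw [Set.mem_singleton_iff] at hz
    subst hz
    exact IntermediateField.mem_adjoin_simple_self K θc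
  have hxE : x ∈ E₀ := by
    have hxK : x ∈ K := IntermediateField.mem_adjoin_simple_self ℚ x
    exact E.algebraMap_mem ⟨x, hxK⟩
  have hxF4 : x ∉ F4 := by
    intro hx
    apply x_not_mem_Rf'
    have hsub : F4 ≤ Rf' := by
      rw [hF4, IntermediateField.adjoin_le_iff]
      rintro z hz
      rw [Set.mem_singleton_iff] at hz
      exact ⟨θ, hz.symm⟩
    exact hsub hx
  -- tower ℚ ⊆ F4 ⊆ E₀
  have ht2 : Module.finrank ℚ F4 * IntermediateField.relfinrank F4 E₀ = Module.finrank ℚ E₀ :=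
    IntermediateField.finrank_bot_mul_relfinrank hle
  have hE0pos : 0 < Module.finrank ℚ E₀ := Module.finrank_pos
  have hne : IntermediateField.relfinrank F4 E₀ ≠ 1 := by
    intro h1
    apply hxF4
    rw [h1, mul_one] at ht2
    have : F4 = E₀ := IntermediateField.eq_of_le_of_finrank_eq hle ht2
    rw [this]; exact hxE
  have h8 : 8 ≤ Module.finrank ℚ E₀ := by
    rw [h4] at ht2
    omega
  -- conclude that [E : K] ≥ 4
  have hKpos : 0 < Module.finrank ℚ K := Module.finrank_pos
  have hEge : 4 ≤ Module.finrank K E := by nlinarith [htower, hrkE0, h8, hK2, hKpos]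
  -- the minimal polynomial over K
  have hdK : Module.finrank K E = (minpoly K θc).natDegree :=
    IntermediateField.adjoin.finrank hθKint
  have hdvd : minpoly K θc ∣ fZ'.map (Int.castRingHom K) := minpoly.dvd K θc haevalK
  have hdle : (minpoly K θc).natDegree ≤ 4 := by
    have := Polynomial.natDegree_le_of_dvd hdvd (fZ'_monic.map _).ne_zero
    rwa [fZ'_monic.natDegree_map, fZ'_natDegree] at this
  have heq : fZ'.map (Int.castRingHom K) = minpoly K θc := by
    apply Polynomial.eq_of_monic_of_dvd_of_natDegree_le (minpoly.monic hθKint)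
      (fZ'_monic.map _) hdvd
    rw [fZ'_monic.natDegree_map, fZ'_natDegree]
    omega
  have hirr : Irreducible (fZ'.map (Int.castRingHom K)) := heq.symm ▸ minpoly.irreducible hθKint
  rwa [fZ'_map] at hirr
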